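/- There exists a unique pair (R, P) with R > 0 and P ∈ ℝ^K such that all entries of P are strictly positive, ∑_k P_k = P_T, and R_k(P) = R for every k ∈ {1, …, K}; i.e., the equal-rate full-power allocation exists and is unique. -/

import Mathlib

/-- Achievable rate of user `k` in downlink NOMA:
`R_k(P) = log₂(1 + P_k g_k / (g_k ∑_{j<k} P_j + 1))`
(for `k = 0`, i.e. user 1, the sum is empty and this is `log₂(1 + P_1 g_1)`). -/
noncomputable def rate {K : ℕ} (g P : Fin K → ℝ) (k : Fin K) : ℝ :=
  Real.logb 2
    (1 + P k * g k / (g k * (∑ j ∈ Finset.univ.filter (fun j => j < k), P j) + 1))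

namespace Stmt7

noncomputable def Gx {K : ℕ} (g : Fin K → ℝ) (n : ℕ) : ℝ :=
  if h : n < K then g ⟨n, h⟩ else 1

noncomputable def SS {K : ℕ} (g : Fin K → ℝ) (t : ℝ) : ℕ → ℝ
  | 0 => 0
  | n + 1 => t * SS g t n + (t - 1) / Gx g n

lemma Gx_pos {K : ℕ} {g : Fin K → ℝ} (hg : ∀ k, 0 < g k) (n : ℕ) : 0 < Gx g n := by
  unfold Gx; split
  · exact hg _
  · norm_num

lemma SS_nonneg {K : ℕ} {g : Fin K → ℝ} (hg : ∀ k, 0 < g k) {t : ℝ} (ht : 1 ≤ t) :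
    ∀ n, 0 ≤ SS g t n
  | 0 => le_refl 0
  | n + 1 => by
    have h1 := SS_nonneg hg ht n
    have h2 := Gx_pos hg n
    have h3 : 0 ≤ (t - 1) / Gx g n := div_nonneg (by linarith) h2.le
    have h4 : 0 ≤ t * SS g t n := mul_nonneg (by linarith) h1
    show 0 ≤ t * SS g t n + (t - 1) / Gx g n
    linarith

lemma SS_mono {K : ℕ} {g : Fin K → ℝ} (hg : ∀ k, 0 < g k) {t₁ t₂ : ℝ}
    (h1 : 1 ≤ t₁) (h12 : t₁ ≤ t₂) : ∀ n, SS g t₁ n ≤ SS g t₂ n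
  | 0 => le_refl 0
  | n + 1 => by
    have ih := SS_mono hg h1 h12 n
    have hn1 := SS_nonneg hg h1 n
    have hG := Gx_pos hg n
    have hm : t₁ * SS g t₁ n ≤ t₂ * SS g t₂ n :=
      mul_le_mul h12 ih hn1 (by linarith)
    have hd : (t₁ - 1) / Gx g n ≤ (t₂ - 1) / Gx g n := by
      gcongr
    show t₁ * SS g t₁ n + (t₁ - 1) / Gx g n ≤ t₂ * SS g t₂ n + (t₂ - 1) / Gx g n
    linarith

lemma SS_strict {K : ℕ} {g : Fin K → ℝ} (hg : ∀ k, 0 < g k) {t₁ t₂ : ℝ}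
    (h1 : 1 ≤ t₁) (h12 : t₁ < t₂) (n : ℕ) : SS g t₁ (n + 1) < SS g t₂ (n + 1) := by
  have ih := SS_mono hg h1 h12.le n
  have hn1 := SS_nonneg hg h1 n
  have hG := Gx_pos hg n
  have hm : t₁ * SS g t₁ n ≤ t₂ * SS g t₂ n :=
    mul_le_mul h12.le ih hn1 (by linarith)
  have hd : (t₁ - 1) / Gx g n < (t₂ - 1) / Gx g n := by
    have h0 : 0 < (t₂ - t₁) / Gx g n := div_pos (by linarith) hG
    have he : (t₁ - 1) / Gx g n + (t₂ - t₁) / Gx g n = (t₂ - 1) / Gx g n := by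
      rw [← add_div]; ring_nf
    linarith
  show t₁ * SS g t₁ n + (t₁ - 1) / Gx g n < t₂ * SS g t₂ n + (t₂ - 1) / Gx g n
  linarith

lemma SS_cont {K : ℕ} (g : Fin K → ℝ) : ∀ n, Continuous fun t => SS g t n
  | 0 => continuous_const
  | n + 1 => by
    have ih := SS_cont g n
    show Continuous fun t => t * SS g t n + (t - 1) / Gx g n
    exact (continuous_id.mul ih).add ((continuous_id.sub continuous_const).div_const _)

lemma SS_one {K : ℕ} (g : Fin K → ℝ) : ∀ n, SS g 1 n = 0
  | 0 => rfl
  | n + 1 => by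
    show 1 * SS g 1 n + (1 - 1) / Gx g n = 0
    rw [SS_one g n]; ring

noncomputable def Pd {K : ℕ} (P : Fin K → ℝ) (i : ℕ) : ℝ :=
  if h : i < K then P ⟨i, h⟩ else 0

lemma Pd_lt {K : ℕ} (P : Fin K → ℝ) {i : ℕ} (h : i < K) : Pd P i = P ⟨i, h⟩ := dif_pos h

lemma sum_filter_lt {K : ℕ} (P : Fin K → ℝ) (k : Fin K) :
    (∑ j ∈ Finset.univ.filter (fun j => j < k), P j) = ∑ i ∈ Finset.range k.val, Pd P i := by
  rw [Finset.sum_filter]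
  have h1 : (∑ j : Fin K, if j < k then P j else 0)
      = ∑ i ∈ Finset.range K, (if i < k.val then Pd P i else 0) := by
    rw [← Fin.sum_univ_eq_sum_range (fun i => if i < k.val then Pd P i else 0) K]
    apply Finset.sum_congr rfl
    intro j _
    by_cases h : j < k
    · rw [if_pos h, if_pos (by exact h), Pd_lt P j.isLt]
    · rw [if_neg h, if_neg (by exact h)]
  rw [h1]
  rw [← Finset.sum_filter]
  congr 1
  ext i
  simp only [Finset.mem_filter, Finset.mem_range]
  omega

lemma sum_univ_eq {K : ℕ} (P : Fin K → ℝ) : (∑ k, P k) = ∑ i ∈ Finset.range K, Pd P i := by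
  rw [← Fin.sum_univ_eq_sum_range (Pd P) K]
  apply Finset.sum_congr rfl
  intro j _
  rw [Pd_lt P j.isLt]

/-- Explicit version: if `P` is given by the closed form, its prefix sums are `SS`. -/
lemma prefix_eq' {K : ℕ} {g : Fin K → ℝ} (hg : ∀ k, 0 < g k) {t : ℝ} {P : Fin K → ℝ}
    (hP : ∀ k : Fin K, P k = (t - 1) * (SS g t k.val + 1 / g k)) :
    ∀ n, n ≤ K → (∑ i ∈ Finset.range n, Pd P i) = SS g t n
  | 0, _ => by simp [SS]
  | n + 1, h => by
    have hn : n < K := h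
    have ih := prefix_eq' hg hP n hn.le
    rw [Finset.sum_range_succ, ih, Pd_lt P hn, hP ⟨n, hn⟩]
    show SS g t n + (t - 1) * (SS g t n + 1 / g ⟨n, hn⟩) = t * SS g t n + (t - 1) / Gx g n
    rw [show Gx g n = g ⟨n, hn⟩ from dif_pos hn]
    have hg0 : g ⟨n, hn⟩ ≠ 0 := (hg _).ne'
    field_simp
    ring

/-- Self-referential version: if `P k = (t-1)(prefix_k + 1/g k)` then prefix sums are `SS`. -/
lemma prefix_eq {K : ℕ} {g : Fin K → ℝ} (hg : ∀ k, 0 < g k) {t : ℝ} {P : Fin K → ℝ}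
    (hP : ∀ k : Fin K,
      P k = (t - 1) * ((∑ j ∈ Finset.univ.filter (fun j => j < k), P j) + 1 / g k)) :
    ∀ n, n ≤ K → (∑ i ∈ Finset.range n, Pd P i) = SS g t n
  | 0, _ => by simp [SS]
  | n + 1, h => by
    have hn : n < K := h
    have ih := prefix_eq hg hP n hn.le
    have hk := hP ⟨n, hn⟩
    rw [sum_filter_lt P ⟨n, hn⟩] at hk
    simp only [] at hk
    rw [Finset.sum_range_succ, ih, Pd_lt P hn, hk, ih]
    show SS g t n + (t - 1) * (SS g t n + 1 / g ⟨n, hn⟩) = t * SS g t n + (t - 1) / Gx g n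
    rw [show Gx g n = g ⟨n, hn⟩ from dif_pos hn]
    have hg0 : g ⟨n, hn⟩ ≠ 0 := (hg _).ne'
    field_simp
    ring

end Stmt7

open Stmt7 in
/-- The equal-rate full-power allocation exists and is unique. -/
theorem stmt_7 (K : ℕ) (hK : 1 ≤ K) (g : Fin K → ℝ)
    (hgpos : ∀ k, 0 < g k) (hgdec : StrictAnti g)
    (P_T : ℝ) (hPT : 0 < P_T) :
    ∃! p : ℝ × (Fin K → ℝ),
      0 < p.1 ∧ (∀ k, 0 < p.2 k) ∧ (∑ k, p.2 k) = P_T ∧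
        ∀ k, rate g p.2 k = p.1 := by
  obtain ⟨m, rfl⟩ : ∃ m, K = m + 1 := ⟨K - 1, by omega⟩
  -- total-power function
  set F : ℝ → ℝ := fun t => SS g t (m + 1) with hF
  have hF1 : F 1 = 0 := SS_one g (m + 1)
  have hGm : 0 < Gx g m := Gx_pos hgpos m
  have hgrow : ∀ t : ℝ, 1 ≤ t → (t - 1) / Gx g m ≤ F t := by
    intro t ht
    have h1 : 0 ≤ t * SS g t m := mul_nonneg (by linarith) (SS_nonneg hgpos ht m)
    show (t - 1) / Gx g m ≤ t * SS g t m + (t - 1) / Gx g m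
    linarith
  set T : ℝ := 1 + P_T * Gx g m with hT
  have hT1 : (1 : ℝ) ≤ T := by nlinarith
  have hFT : P_T ≤ F T := by
    have := hgrow T hT1
    have he : (T - 1) / Gx g m = P_T := by
      rw [hT]; field_simp; ring
    linarith [he ▸ this]
  -- find a root t₀ ∈ [1, T] with F t₀ = P_T
  have hIVT := intermediate_value_Icc hT1 ((SS_cont g (m + 1)).continuousOn (s := Set.Icc 1 T))
  have hmem : P_T ∈ Set.Icc (F 1) (F T) := by rw [hF1]; exact ⟨hPT.le, hFT⟩
  obtain ⟨t₀, ht₀mem, ht₀⟩ := hIVT hmem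
  have ht₀' : F t₀ = P_T := ht₀
  have ht₀1 : 1 < t₀ := by
    rcases eq_or_lt_of_le ht₀mem.1 with h | h
    · exfalso; rw [← h] at ht₀'; rw [hF1] at ht₀'; linarith
    · exact h
  -- uniqueness of the root
  have huniq : ∀ t : ℝ, 1 < t → F t = P_T → t = t₀ := by
    intro t ht hFt
    rcases lt_trichotomy t t₀ with h | h | h
    · have := SS_strict hgpos ht.le h m
      exact absurd (hFt.trans ht₀'.symm) (ne_of_lt this)
    · exact h
    · have := SS_strict hgpos ht₀1.le h m
      exact absurd (ht₀'.trans hFt.symm) (ne_of_lt this)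
  -- the candidate solution
  set R₀ : ℝ := Real.logb 2 t₀ with hR₀
  set P₀ : Fin (m + 1) → ℝ := fun k => (t₀ - 1) * (SS g t₀ k.val + 1 / g k) with hP₀
  have hP₀form : ∀ k : Fin (m + 1), P₀ k = (t₀ - 1) * (SS g t₀ k.val + 1 / g k) := fun k => rfl
  have hpre₀ := prefix_eq' hgpos hP₀form
  have hpf₀ : ∀ k : Fin (m + 1),
      (∑ j ∈ Finset.univ.filter (fun j => j < k), P₀ j) = SS g t₀ k.val := by
    intro k
    rw [sum_filter_lt, hpre₀ k.val k.isLt.le]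
  have hrate₀ : ∀ k : Fin (m + 1), rate g P₀ k = R₀ := by
    intro k
    unfold rate
    rw [hpf₀ k]
    have hgk := hgpos k
    have hSk := SS_nonneg hgpos ht₀1.le k.val
    have hD : 0 < g k * SS g t₀ k.val + 1 := by nlinarith
    have harg : 1 + P₀ k * g k / (g k * SS g t₀ k.val + 1) = t₀ := by
      rw [hP₀form k]
      field_simp
      ring
    rw [harg]
  refine ⟨(R₀, P₀), ⟨?_, ?_, ?_, hrate₀⟩, ?_⟩
  · exact Real.logb_pos (by norm_num) ht₀1
  · intro k
    exact mul_pos (by linarith) (by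
      have := SS_nonneg hgpos ht₀1.le k.val
      have := hgpos k
      positivity)
  · show (∑ k, P₀ k) = P_T
    rw [sum_univ_eq, hpre₀ (m + 1) le_rfl]
    exact ht₀'
  · rintro ⟨R, P⟩ ⟨hR, hPpos, hsum, hrate⟩
    simp only at hR hPpos hsum hrate ⊢
    set t : ℝ := (2 : ℝ) ^ R with htdef
    have ht1 : 1 < t := Real.one_lt_rpow_iff_of_pos (by norm_num) |>.mpr (Or.inl ⟨one_lt_two, hR⟩)
    have hpfnn : ∀ k : Fin (m + 1),
        0 ≤ ∑ j ∈ Finset.univ.filter (fun j => j < k), P j := by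
      intro k
      exact Finset.sum_nonneg fun j _ => (hPpos j).le
    have hPk : ∀ k : Fin (m + 1),
        P k = (t - 1) * ((∑ j ∈ Finset.univ.filter (fun j => j < k), P j) + 1 / g k) := by
      intro k
      have hrk : Real.logb 2
          (1 + P k * g k /
            (g k * (∑ j ∈ Finset.univ.filter (fun j => j < k), P j) + 1)) = R := hrate k
      set pf := ∑ j ∈ Finset.univ.filter (fun j => j < k), P j with hpf
      have hgk := hgpos k
      have hD : 0 < g k * pf + 1 := by nlinarith [hpfnn k]
      have hx : 0 < 1 + P k * g k / (g k * pf + 1) := by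
        have : 0 ≤ P k * g k / (g k * pf + 1) := div_nonneg (by nlinarith [hPpos k]) hD.le
        linarith
      have hxe : 1 + P k * g k / (g k * pf + 1) = t := by
        rw [htdef, ← hrk, Real.rpow_logb (by norm_num : (0:ℝ) < 2) (by norm_num) hx]
      have h1 : P k * g k = (t - 1) * (g k * pf + 1) := by
        have h2 : P k * g k / (g k * pf + 1) = t - 1 := by linarith
        exact (div_eq_iff hD.ne').mp h2
      field_simp
      linear_combination h1
    have hpre := prefix_eq hgpos hPk
    have hroot : F t = P_T := by
      show SS g t (m + 1) = P_T
      rw [← hpre (m + 1) le_rfl, ← sum_univ_eq]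
      exact hsum
    have htt₀ : t = t₀ := huniq t ht1 hroot
    have hReq : R = R₀ := by
      rw [hR₀, ← htt₀, htdef, Real.logb_rpow (by norm_num) (by norm_num)]
    have hPeq : P = P₀ := by
      funext k
      rw [hPk k, sum_filter_lt, hpre k.val k.isLt.le, htt₀, hP₀form k]
    rw [Prod.mk.injEq]
    exact ⟨hReq, hPeq⟩
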